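/- arXiv:2305.06239 — 2 statements merged into one kernel-verified Lean document; each statement's English description precedes it below -/
import Mathlib

section
/- (Csiszár–Kullback–Pinsker inequality.) Let (Ω, μ) be a measure space with 0 < μ(Ω) < ∞, and let u : Ω → ℝ be a nonnegative integrable function with mean ū := (1/μ(Ω)) ∫_Ω u dμ > 0, such that the function x ↦ u(x) log(u(x)/ū) is integrable. Then 4 · μ(Ω) · ū · ∫_Ω u log(u/ū) dμ ≥ (∫_Ω |u − ū| dμ)². -/
open MeasureTheory

lemma sqrt_sub_sq_le_aux {a b : ℝ} (ha : 0 ≤ a) (hb : 0 < b) :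
    (Real.sqrt a - Real.sqrt b) ^ 2 ≤ a * Real.log (a / b) - a + b := by
  rcases eq_or_lt_of_le ha with h | h
  · rw [← h]
    simp [Real.sq_sqrt hb.le]
  · set x := Real.sqrt a with hxdef
    set y := Real.sqrt b with hydef
    have hx : 0 < x := Real.sqrt_pos.mpr h
    have hy : 0 < y := Real.sqrt_pos.mpr hb
    have hxa : x ^ 2 = a := Real.sq_sqrt ha
    have hyb : y ^ 2 = b := Real.sq_sqrt hb.le
    have hlog : Real.log (a / b) = 2 * Real.log (x / y) := by
      rw [← hxa, ← hyb, ← div_pow, Real.log_pow]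
      push_cast; ring
    have h1 : 1 - (x / y)⁻¹ ≤ Real.log (x / y) :=
      Real.one_sub_inv_le_log_of_pos (div_pos hx hy)
    rw [inv_div] at h1
    have h3 : x - y ≤ x * Real.log (x / y) := by
      have h2 := mul_le_mul_of_nonneg_left h1 hx.le
      calc x - y = x * (1 - y / x) := by field_simp
        _ ≤ x * Real.log (x / y) := h2
    rw [hlog, ← hxa, ← hyb]
    nlinarith [mul_le_mul_of_nonneg_left h3 (mul_nonneg (by norm_num : (0:ℝ) ≤ 2) hx.le)]

/-- Csiszár–Kullback–Pinsker inequality: for a finite measure space `(Ω, μ)` with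
`0 < μ(Ω) < ∞` and a nonnegative integrable `u` with positive mean `ū`, such that
`u log(u/ū)` is integrable,
`4 μ(Ω) ū ∫ u log(u/ū) ≥ (∫ |u − ū|)²`. -/
theorem csiszar_kullback_pinsker
    {Ω : Type*} [MeasurableSpace Ω] (μ : Measure Ω)
    (hμ0 : 0 < μ Set.univ) (hμfin : μ Set.univ < ⊤)
    (u : Ω → ℝ) (hu_int : Integrable u μ) (hu_nonneg : ∀ᵐ x ∂μ, 0 ≤ u x)
    (ubar : ℝ) (hubar : ubar = (∫ x, u x ∂μ) / (μ Set.univ).toReal)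
    (hubar_pos : 0 < ubar)
    (hlog_int : Integrable (fun x => u x * Real.log (u x / ubar)) μ) :
    4 * (μ Set.univ).toReal * ubar * (∫ x, u x * Real.log (u x / ubar) ∂μ) ≥
      (∫ x, |u x - ubar| ∂μ) ^ 2 := by
  haveI : IsFiniteMeasure μ := ⟨hμfin⟩
  set M := (μ Set.univ).toReal with hM
  have hMpos : 0 < M := ENNReal.toReal_pos hμ0.ne' hμfin.ne
  have hIu : ∫ x, u x ∂μ = ubar * M := by
    rw [hubar]; field_simp
  set s := Real.sqrt ubar with hs
  have hs_pos : 0 < s := Real.sqrt_pos.mpr hubar_pos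
  have hs_sq : s ^ 2 = ubar := Real.sq_sqrt hubar_pos.le
  set g : Ω → ℝ := fun x => Real.sqrt (u x) with hgdef
  have hg_nonneg : ∀ x, 0 ≤ g x := fun x => Real.sqrt_nonneg _
  have hg_meas : AEStronglyMeasurable g μ :=
    Real.continuous_sqrt.comp_aestronglyMeasurable hu_int.1
  have hg_sq : ∀ᵐ x ∂μ, g x ^ 2 = u x := by
    filter_upwards [hu_nonneg] with x hx
    exact Real.sq_sqrt hx
  have hbound : Integrable (fun x => 2 * u x + 2 * ubar) μ :=
    (hu_int.const_mul 2).add (integrable_const _)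
  -- integrability of (g - s)^2 and (g + s)^2
  have hA_int : Integrable (fun x => (g x - s) ^ 2) μ := by
    refine Integrable.mono' hbound ?_ ?_
    · exact (hg_meas.sub aestronglyMeasurable_const).pow 2
    · filter_upwards [hg_sq] with x hx
      rw [Real.norm_eq_abs, abs_of_nonneg (sq_nonneg _)]
      nlinarith [sq_nonneg (g x + s), hs_sq]
  have hB_int : Integrable (fun x => (g x + s) ^ 2) μ := by
    refine Integrable.mono' hbound ?_ ?_
    · exact (hg_meas.add aestronglyMeasurable_const).pow 2
    · filter_upwards [hg_sq] with x hx
      rw [Real.norm_eq_abs, abs_of_nonneg (sq_nonneg _)]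
      nlinarith [sq_nonneg (g x - s), hs_sq]
  set A := ∫ x, (g x - s) ^ 2 ∂μ with hA
  set B := ∫ x, (g x + s) ^ 2 ∂μ with hB
  set I := ∫ x, u x * Real.log (u x / ubar) ∂μ with hI
  have hA0 : 0 ≤ A := integral_nonneg fun x => sq_nonneg _
  have hB0 : 0 ≤ B := integral_nonneg fun x => sq_nonneg _
  -- rewrite the L¹ norm integrand
  have hkey : ∫ x, |u x - ubar| ∂μ = ∫ x, |g x - s| * (g x + s) ∂μ := by
    refine integral_congr_ae ?_
    filter_upwards [hg_sq] with x hx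
    rw [← hx, ← hs_sq, show g x ^ 2 - s ^ 2 = (g x - s) * (g x + s) by ring, abs_mul,
      abs_of_pos (add_pos_of_nonneg_of_pos (hg_nonneg x) hs_pos)]
  -- Cauchy–Schwarz
  have hconj : Real.HolderConjugate 2 2 := Real.HolderConjugate.two_two
  have hF : MemLp (fun x => |g x - s|) (ENNReal.ofReal 2) μ := by
    rw [show ENNReal.ofReal 2 = 2 by norm_num]
    refine (memLp_two_iff_integrable_sq
      ((hg_meas.sub aestronglyMeasurable_const).norm)).mpr ?_
    simpa [sq_abs] using hA_int
  have hG : MemLp (fun x => g x + s) (ENNReal.ofReal 2) μ := by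
    rw [show ENNReal.ofReal 2 = 2 by norm_num]
    exact (memLp_two_iff_integrable_sq (hg_meas.add aestronglyMeasurable_const)).mpr hB_int
  have hCS := integral_mul_le_Lp_mul_Lq_of_nonneg hconj
    (ae_of_all μ fun x => abs_nonneg _)
    (ae_of_all μ fun x => add_nonneg (hg_nonneg x) hs_pos.le) hF hG
  have hpowF : ∫ x, |g x - s| ^ (2:ℝ) ∂μ = A := by
    refine integral_congr_ae (ae_of_all μ fun x => ?_)
    show |g x - s| ^ (2:ℝ) = (g x - s) ^ 2
    rw [show ((2:ℝ)) = ((2:ℕ):ℝ) by norm_num, Real.rpow_natCast, sq_abs]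
  have hpowG : ∫ x, (g x + s) ^ (2:ℝ) ∂μ = B := by
    refine integral_congr_ae (ae_of_all μ fun x => ?_)
    show (g x + s) ^ (2:ℝ) = (g x + s) ^ 2
    rw [show ((2:ℝ)) = ((2:ℕ):ℝ) by norm_num, Real.rpow_natCast]
  rw [hpowF, hpowG] at hCS
  have hsq : (A ^ (1/(2:ℝ)) * B ^ (1/(2:ℝ))) ^ 2 = A * B := by
    rw [mul_pow, ← Real.rpow_natCast (A ^ (1/(2:ℝ))) 2, ← Real.rpow_natCast (B ^ (1/(2:ℝ))) 2,
      ← Real.rpow_mul hA0, ← Real.rpow_mul hB0]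
    norm_num
  have habs0 : 0 ≤ ∫ x, |u x - ubar| ∂μ := integral_nonneg fun x => abs_nonneg _
  have hCS2 : (∫ x, |u x - ubar| ∂μ) ^ 2 ≤ A * B := by
    rw [← hsq, hkey]
    exact pow_le_pow_left₀ (by rw [← hkey]; exact habs0) hCS 2
  -- bound B
  have hBle : B ≤ 4 * ubar * M := by
    have h1 : B ≤ ∫ x, (2 * u x + 2 * ubar) ∂μ := by
      refine integral_mono_ae hB_int hbound ?_
      filter_upwards [hg_sq] with x hx
      nlinarith [sq_nonneg (g x - s), hs_sq]
    have h2 : ∫ x, (2 * u x + 2 * ubar) ∂μ = 4 * ubar * M := by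
      have e1 : Integrable (fun x => 2 * u x) μ := hu_int.const_mul 2
      rw [integral_add e1 (integrable_const _), integral_const_mul,
        integral_const, measureReal_def, hIu, smul_eq_mul]
      ring
    linarith
  -- bound A
  have e2 : Integrable (fun x => u x * Real.log (u x / ubar) - u x) μ := hlog_int.sub hu_int
  have hRHS_int : Integrable (fun x => u x * Real.log (u x / ubar) - u x + ubar) μ :=
    e2.add (integrable_const _)
  have hAle : A ≤ I := by
    have h1 : A ≤ ∫ x, (u x * Real.log (u x / ubar) - u x + ubar) ∂μ := by
      refine integral_mono_ae hA_int hRHS_int ?_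
      filter_upwards [hu_nonneg] with x hx
      exact sqrt_sub_sq_le_aux hx hubar_pos
    have h2 : ∫ x, (u x * Real.log (u x / ubar) - u x + ubar) ∂μ = I := by
      rw [integral_add e2 (integrable_const _),
        integral_sub hlog_int hu_int, integral_const, measureReal_def, hIu, smul_eq_mul, ← hI]
      ring
    linarith
  have hI0 : 0 ≤ I := le_trans hA0 hAle
  have : A * B ≤ I * (4 * ubar * M) := mul_le_mul hAle hBle hB0 hI0
  have hfinal : (∫ x, |u x - ubar| ∂μ) ^ 2 ≤ I * (4 * ubar * M) := le_trans hCS2 this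
  calc (∫ x, |u x - ubar| ∂μ) ^ 2 ≤ I * (4 * ubar * M) := hfinal
    _ = 4 * M * ubar * I := by ring
end

section
/- For all real numbers x ≥ 0 and y > 0, the inequality x·log(x/y) − x + y ≥ (√x − √y)² holds. -/
/-- For all `x ≥ 0` and `y > 0`, `x·log(x/y) − x + y ≥ (√x − √y)²`. -/
theorem log_inequality_sqrt (x y : ℝ) (hx : 0 ≤ x) (hy : 0 < y) :
    x * Real.log (x / y) - x + y ≥ (Real.sqrt x - Real.sqrt y) ^ 2 := by
  rcases eq_or_lt_of_le hx with h0 | hxpos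
  · simp [← h0, Real.sq_sqrt hy.le]
  · set s := Real.sqrt x with hs
    set r := Real.sqrt y with hr
    have hs0 : 0 < s := Real.sqrt_pos.mpr hxpos
    have hr0 : 0 < r := Real.sqrt_pos.mpr hy
    have hsx : s ^ 2 = x := Real.sq_sqrt hx
    have hry : r ^ 2 = y := Real.sq_sqrt hy.le
    have hlog : Real.log (x / y) = 2 * (Real.log s - Real.log r) := by
      rw [Real.log_div (ne_of_gt hxpos) (ne_of_gt hy), ← hsx, ← hry,
        Real.log_pow, Real.log_pow]
      ring
    have hle : Real.log (r / s) ≤ r / s - 1 :=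
      Real.log_le_sub_one_of_pos (div_pos hr0 hs0)
    rw [Real.log_div (ne_of_gt hr0) (ne_of_gt hs0)] at hle
    have key : Real.log s - Real.log r ≥ 1 - r / s := by linarith
    have hmul : x * (Real.log s - Real.log r) ≥ x * (1 - r / s) :=
      mul_le_mul_of_nonneg_left key hx
    rw [hlog]
    have hxs : x * (1 - r / s) = x - s * r := by
      rw [← hsx]; field_simp
    nlinarith [hmul, hxs]
end
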